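/- (Soundness for stable logic) If a formula φ is E′-valid, then φ belongs to stable logic. -/

import Mathlib

/- Formalization of Lorenzen dialogue games, following Felscher's presentation.

   Propositional formulas are built from atoms using ¬, ∧, ∨, →.  A dialogue
   for a formula φ is a sequence of moves beginning with Proponent (P)
   asserting φ at position 0, with O moving at odd positions and P at even
   positions.  Each later move attacks or defends an earlier move of the other
   player, according to the particle rules.  Structural rules (D10, D11, D12,
   D13, E, and the variants D10*, D10′) constrain dialogues further.  P wins
   if P made the last move and no moves are available to O; φ is S-valid if P
   has an S-winning strategy for φ. -/

namespace LorenzenDialogues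

/-- Propositional formulas: atoms, ¬, ∧, ∨, →. -/
inductive Formula : Type
  | atom : ℕ → Formula
  | neg  : Formula → Formula
  | and  : Formula → Formula → Formula
  | or   : Formula → Formula → Formula
  | imp  : Formula → Formula → Formula
deriving DecidableEq

/-- Statements: formulas together with the symbolic attacks `?`, `∧_L`, `∧_R`. -/
inductive Statement : Type
  | form  : Formula → Statement
  | qmark : Statement
  | andL  : Statement
  | andR  : Statement
deriving DecidableEq

/-- Particle rules, attack part: which statements attack which formulas. -/
inductive Attacks : Statement → Formula → Prop
  | andL (a b : Formula) : Attacks .andL (.and a b)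
  | andR (a b : Formula) : Attacks .andR (.and a b)
  | qmark (a b : Formula) : Attacks .qmark (.or a b)
  | imp (a b : Formula) : Attacks (.form a) (.imp a b)
  | neg (a : Formula) : Attacks (.form a) (.neg a)

/-- Particle rules, defense part: `Defends χ a s` means `s` is a permitted
    defense of the formula `χ` against the attack `a`.  (A negation admits
    no defense.) -/
inductive Defends : Formula → Statement → Statement → Prop
  | andL (a b : Formula) : Defends (.and a b) .andL (.form a)
  | andR (a b : Formula) : Defends (.and a b) .andR (.form b)
  | orL (a b : Formula) : Defends (.or a b) .qmark (.form a)
  | orR (a b : Formula) : Defends (.or a b) .qmark (.form b)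
  | imp (a b : Formula) : Defends (.imp a b) (.form a) (.form b)

/-- A move: a statement, a flag recording whether it is an attack (`true`)
    or a defense (`false`), and the position of the earlier move it attacks,
    resp. the earlier attack it defends against. -/
structure Move : Type where
  statement : Statement
  isAttack : Bool
  ref : ℕ
deriving DecidableEq

/-- A dialogue: the initial formula asserted by P at position 0, followed by
    the list of later moves (the move at list index `i` occupies position
    `i + 1`; O moves at odd positions, P at even positions). -/
structure Dialogue : Type where
  initial : Formula
  moves : List Move

/-- The statement asserted at position `n` (if any). -/
def Dialogue.stmtAt (d : Dialogue) (n : ℕ) : Option Statement :=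
  if n = 0 then some (.form d.initial) else (d.moves[n - 1]?).map Move.statement

/-- The move at position `n ≥ 1` (if any); position 0 is the initial assertion,
    not a move. -/
def Dialogue.moveAt (d : Dialogue) (n : ℕ) : Option Move :=
  if n = 0 then none else d.moves[n - 1]?

/-- The move `m`, played at position `n ≥ 1`, is permitted by the particle
    rules: it refers to an earlier position of the other player; if it is an
    attack, it attacks a formula asserted there, and if it is a defense, it
    responds to an attack played there, as the particle rules prescribe. -/
def MoveOK (d : Dialogue) (n : ℕ) (m : Move) : Prop :=
  m.ref < n ∧ m.ref % 2 ≠ n % 2 ∧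
    (m.isAttack = true →
      ∃ ψ, d.stmtAt m.ref = some (.form ψ) ∧ Attacks m.statement ψ) ∧
    (m.isAttack = false →
      ∃ a χ, d.moveAt m.ref = some a ∧ a.isAttack = true ∧
        d.stmtAt a.ref = some (.form χ) ∧ Defends χ a.statement m.statement)

/-- The dialogue adheres to the particle rules (every move is legal). -/
def ParticleOK (d : Dialogue) : Prop :=
  ∀ i m, d.moves[i]? = some m → MoveOK d (i + 1) m

/-- Position `n` carries a defense of the attack made at position `r`. -/
def IsDefenseOf (d : Dialogue) (n r : ℕ) : Prop :=
  ∃ m, d.moveAt n = some m ∧ m.isAttack = false ∧ m.ref = r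

/-- Position `n` carries an attack on the assertion made at position `r`. -/
def IsAttackOn (d : Dialogue) (n r : ℕ) : Prop :=
  ∃ m, d.moveAt n = some m ∧ m.isAttack = true ∧ m.ref = r

/-- Position `n` carries an attack. -/
def IsAttackPos (d : Dialogue) (n : ℕ) : Prop :=
  ∃ m, d.moveAt n = some m ∧ m.isAttack = true

/-- The attack at position `r` is still open (no defense against it has yet
    been played) before position `k`. -/
def OpenAt (d : Dialogue) (r k : ℕ) : Prop :=
  IsAttackPos d r ∧ ¬ ∃ j, j < k ∧ IsDefenseOf d j r

/-- (D10) P may assert an atomic formula only after it has been asserted by O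
    before. -/
def D10 (d : Dialogue) : Prop :=
  ∀ n p, n % 2 = 0 → d.stmtAt n = some (.form (.atom p)) →
    ∃ j, j < n ∧ j % 2 = 1 ∧ d.stmtAt j = some (.form (.atom p))

/-- (D10*) P may assert an atom `p` only if O has asserted `p` or `¬p`
    before. -/
def D10star (d : Dialogue) : Prop :=
  ∀ n p, n % 2 = 0 → d.stmtAt n = some (.form (.atom p)) →
    ∃ j, j < n ∧ j % 2 = 1 ∧
      (d.stmtAt j = some (.form (.atom p)) ∨
        d.stmtAt j = some (.form (.neg (.atom p))))

/-- (D10′) P may assert an atom `p` only if O has asserted `p` or `¬¬p`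
    before. -/
def D10prime (d : Dialogue) : Prop :=
  ∀ n p, n % 2 = 0 → d.stmtAt n = some (.form (.atom p)) →
    ∃ j, j < n ∧ j % 2 = 1 ∧
      (d.stmtAt j = some (.form (.atom p)) ∨
        d.stmtAt j = some (.form (.neg (.neg (.atom p)))))

/-- (D11) When defending, only the most recent open attack may be responded
    to: the attack defended against is open, and no strictly more recent open
    attack (against the same player) exists. -/
def D11 (d : Dialogue) : Prop :=
  ∀ n r, IsDefenseOf d n r →
    OpenAt d r n ∧ ¬ ∃ r', r < r' ∧ r' < n ∧ r' % 2 = r % 2 ∧ OpenAt d r' n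

/-- (D12) An attack may be answered at most once. -/
def D12 (d : Dialogue) : Prop :=
  ∀ n₁ n₂ r, IsDefenseOf d n₁ r → IsDefenseOf d n₂ r → n₁ = n₂

/-- (D13) A P-assertion (made at an even position) may be attacked at most
    once. -/
def D13 (d : Dialogue) : Prop :=
  ∀ n₁ n₂ r, r % 2 = 0 → IsAttackOn d n₁ r → IsAttackOn d n₂ r → n₁ = n₂

/-- (E) O can react only upon the immediately preceding P-statement. -/
def ERule (d : Dialogue) : Prop :=
  ∀ n m, n % 2 = 1 → d.moveAt n = some m → m.ref = n - 1

/-- A ruleset is a set of structural rules, i.e. a predicate on dialogues. -/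
def Ruleset := Dialogue → Prop

/-- Ruleset D = {D10, D11, D12, D13}. -/
def rulesetD : Ruleset := fun d => D10 d ∧ D11 d ∧ D12 d ∧ D13 d

/-- Ruleset E = D ∪ {E}. -/
def rulesetE : Ruleset := fun d => rulesetD d ∧ ERule d

/-- Ruleset CL = E − {D11, D12} = {D10, D13, E}. -/
def rulesetCL : Ruleset := fun d => D10 d ∧ D13 d ∧ ERule d

/-- Ruleset N = D − {D11, D12} = {D10, D13}. -/
def rulesetN : Ruleset := fun d => D10 d ∧ D13 d

/-- Ruleset E* = {D10*, D11, D12, D13, E}. -/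
def rulesetEstar : Ruleset :=
  fun d => D10star d ∧ D11 d ∧ D12 d ∧ D13 d ∧ ERule d

/-- Ruleset E′ = {D10′, D11, D12, D13, E}. -/
def rulesetEprime : Ruleset :=
  fun d => D10prime d ∧ D11 d ∧ D12 d ∧ D13 d ∧ ERule d

/-- An S-dialogue: a dialogue adhering to the particle rules and to the
    structural rules S. -/
def Legal (S : Ruleset) (d : Dialogue) : Prop := ParticleOK d ∧ S d

/-- Extend a dialogue by one move. -/
def Dialogue.extend (d : Dialogue) (m : Move) : Dialogue :=
  ⟨d.initial, d.moves ++ [m]⟩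

/-- The position about to be played. -/
def nextPos (d : Dialogue) : ℕ := d.moves.length + 1

/-- It is P's turn (the next position is even). -/
def PTurn (d : Dialogue) : Prop := nextPos d % 2 = 0

/-- The move `m` legally extends the S-dialogue `d`. -/
def LegalExt (S : Ruleset) (d : Dialogue) (m : Move) : Prop :=
  Legal S (d.extend m)

/-- `PWinningC S C d` holds when P, moving under the additional constraint
    `C` on P's own choices, has a winning strategy in the S-dialogue game
    continuing the dialogue `d`: at P's turn, P has a legal move (satisfying
    `C`) after which P is still winning; at O's turn, every legal O-move
    leads to a position where P is winning (in particular, if no O-move is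
    available, P has won: P made the last move and O cannot move). -/
inductive PWinningC (S : Ruleset) (C : Dialogue → Move → Prop) : Dialogue → Prop
  | pMove (d : Dialogue) (m : Move) (hturn : PTurn d)
      (hm : LegalExt S d m) (hC : C d m)
      (h : PWinningC S C (d.extend m)) : PWinningC S C d
  | oMoves (d : Dialogue) (hturn : ¬ PTurn d)
      (h : ∀ m, LegalExt S d m → PWinningC S C (d.extend m)) :
      PWinningC S C d

/-- P has a winning strategy continuing the S-dialogue `d`. -/
def PWinning (S : Ruleset) (d : Dialogue) : Prop :=
  PWinningC S (fun _ _ => True) d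

/-- `valid S φ` (written `⊨_S φ`): the opening assertion of φ is itself a
    legal S-dialogue and P has an S-winning strategy for φ. -/
def valid (S : Ruleset) (φ : Formula) : Prop :=
  Legal S ⟨φ, []⟩ ∧ PWinning S ⟨φ, []⟩

/-- Derivability in intuitionistic propositional logic (a Hilbert-style
    axiomatization with modus ponens). -/
inductive IProv : Formula → Prop
  | k (a b : Formula) : IProv (.imp a (.imp b a))
  | s (a b c : Formula) :
      IProv (.imp (.imp a (.imp b c)) (.imp (.imp a b) (.imp a c)))
  | andE1 (a b : Formula) : IProv (.imp (.and a b) a)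
  | andE2 (a b : Formula) : IProv (.imp (.and a b) b)
  | andI (a b : Formula) : IProv (.imp a (.imp b (.and a b)))
  | orI1 (a b : Formula) : IProv (.imp a (.or a b))
  | orI2 (a b : Formula) : IProv (.imp b (.or a b))
  | orE (a b c : Formula) :
      IProv (.imp (.imp a c) (.imp (.imp b c) (.imp (.or a b) c)))
  | negI (a b : Formula) :
      IProv (.imp (.imp a b) (.imp (.imp a (.neg b)) (.neg a)))
  | negE (a b : Formula) : IProv (.imp (.neg a) (.imp a b))
  | mp (a b : Formula) : IProv (.imp a b) → IProv a → IProv b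

/-- The stability principle ¬¬p → p for the atom `p`. -/
def stab (p : ℕ) : Formula := .imp (.neg (.neg (.atom p))) (.atom p)

/-- Stable logic: intuitionistic propositional logic plus all instances of
    the stability scheme ¬¬p → p for atoms p, closed under modus ponens. -/
inductive StableProv : Formula → Prop
  | intuit (a : Formula) : IProv a → StableProv a
  | stab (p : ℕ) : StableProv (stab p)
  | mp (a b : Formula) : StableProv (.imp a b) → StableProv a → StableProv b

/-- Boolean evaluation of a formula under a valuation of its atoms. -/
def Formula.eval (v : ℕ → Bool) : Formula → Bool
  | .atom p => v p
  | .neg a => !(a.eval v)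
  | .and a b => a.eval v && b.eval v
  | .or a b => a.eval v || b.eval v
  | .imp a b => !(a.eval v) || b.eval v

/-- A classical tautology: true under every Boolean valuation. -/
def Tautology (φ : Formula) : Prop := ∀ v, φ.eval v = true

/-- Uniform substitution of formulas for atoms, applied homomorphically. -/
def Formula.subst (σ : ℕ → Formula) : Formula → Formula
  | .atom p => σ p
  | .neg a => .neg (a.subst σ)
  | .and a b => .and (a.subst σ) (b.subst σ)
  | .or a b => .or (a.subst σ) (b.subst σ)
  | .imp a b => .imp (a.subst σ) (b.subst σ)

/-- The atoms occurring in a formula. -/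
def Formula.atoms : Formula → List ℕ
  | .atom p => [p]
  | .neg a => a.atoms
  | .and a b => a.atoms ++ b.atoms
  | .or a b => a.atoms ++ b.atoms
  | .imp a b => a.atoms ++ b.atoms

/-- Conjunction of a nonempty list of formulas. -/
def conjList (f : Formula) : List Formula → Formula
  | [] => f
  | g :: gs => .and f (conjList g gs)

/-- The conjunction (¬¬p → p) ∧ … of stability instances for the atoms
    `p :: ps`. -/
def stabConj (p : ℕ) (ps : List ℕ) : Formula :=
  conjList (stab p) (ps.map stab)


section Soundness

open Formula Statement

/-- Canonical falsum. -/
def Fls : Formula := .neg (.imp (.atom 0) (.atom 0))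

/-- Derivability in stable logic from a set of hypotheses. -/
inductive Deriv (Γ : Formula → Prop) : Formula → Prop
  | hyp {a : Formula} : Γ a → Deriv Γ a
  | ax {a : Formula} : StableProv a → Deriv Γ a
  | mp {a b : Formula} : Deriv Γ (.imp a b) → Deriv Γ a → Deriv Γ b

/-- Insert a hypothesis. -/
def ins (a : Formula) (Γ : Formula → Prop) : Formula → Prop := fun x => x = a ∨ Γ x

lemma Deriv.mono {Γ Δ : Formula → Prop} (h : ∀ x, Γ x → Δ x) {a : Formula}
    (hd : Deriv Γ a) : Deriv Δ a := by
  induction hd with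
  | hyp hx => exact .hyp (h _ hx)
  | ax hx => exact .ax hx
  | mp _ _ ih1 ih2 => exact .mp ih1 ih2

lemma sp_k (a b : Formula) : StableProv (.imp a (.imp b a)) := .intuit _ (.k a b)

lemma sp_id (a : Formula) : StableProv (.imp a a) :=
  .mp _ _ (.mp _ _ (.intuit _ (.s a (.imp a a) a)) (.intuit _ (.k a (.imp a a))))
    (.intuit _ (.k a a))

lemma ded {Γ : Formula → Prop} {a b : Formula} (h : Deriv (ins a Γ) b) :
    Deriv Γ (.imp a b) := by
  induction h with
  | hyp hx =>
    rcases hx with rfl | hx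
    · exact .ax (sp_id _)
    · exact .mp (.ax (sp_k _ a)) (.hyp hx)
  | ax hx => exact .mp (.ax (sp_k _ a)) (.ax hx)
  | mp _ _ ih1 ih2 =>
    exact .mp (.mp (.ax (.intuit _ (.s a _ _))) ih1) ih2

lemma dCut {Γ : Formula → Prop} {a g : Formula} (h1 : Deriv Γ a)
    (h2 : Deriv (ins a Γ) g) : Deriv Γ g := .mp (ded h2) h1

lemma dAndI {Γ : Formula → Prop} {a b : Formula} (h1 : Deriv Γ a) (h2 : Deriv Γ b) :
    Deriv Γ (.and a b) := .mp (.mp (.ax (.intuit _ (.andI a b))) h1) h2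

lemma dAndE1 {Γ : Formula → Prop} {a b : Formula} (h : Deriv Γ (.and a b)) :
    Deriv Γ a := .mp (.ax (.intuit _ (.andE1 a b))) h

lemma dAndE2 {Γ : Formula → Prop} {a b : Formula} (h : Deriv Γ (.and a b)) :
    Deriv Γ b := .mp (.ax (.intuit _ (.andE2 a b))) h

lemma dOrI1 {Γ : Formula → Prop} {a : Formula} (b : Formula) (h : Deriv Γ a) :
    Deriv Γ (.or a b) := .mp (.ax (.intuit _ (.orI1 a b))) h

lemma dOrI2 {Γ : Formula → Prop} (a : Formula) {b : Formula} (h : Deriv Γ b) :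
    Deriv Γ (.or a b) := .mp (.ax (.intuit _ (.orI2 a b))) h

lemma dOrE {Γ : Formula → Prop} {a b g : Formula} (h : Deriv Γ (.or a b))
    (h1 : Deriv (ins a Γ) g) (h2 : Deriv (ins b Γ) g) : Deriv Γ g :=
  .mp (.mp (.mp (.ax (.intuit _ (.orE a b g))) (ded h1)) (ded h2)) h

lemma dNegE {Γ : Formula → Prop} {a : Formula} (g : Formula) (h1 : Deriv Γ (.neg a))
    (h2 : Deriv Γ a) : Deriv Γ g := .mp (.mp (.ax (.intuit _ (.negE a g))) h1) h2

lemma dNegI {Γ : Formula → Prop} {a : Formula} (h : Deriv (ins a Γ) Fls) :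
    Deriv Γ (.neg a) := by
  have h1 : Deriv Γ (.imp a (.imp (.atom 0) (.atom 0))) :=
    .mp (.ax (sp_k _ a)) (.ax (sp_id (.atom 0)))
  exact .mp (.mp (.ax (.intuit _ (.negI a (.imp (.atom 0) (.atom 0))))) h1) (ded h)

lemma dStab {Γ : Formula → Prop} {p : ℕ} (h : Deriv Γ (.neg (.neg (.atom p)))) :
    Deriv Γ (.atom p) := .mp (.ax (.stab p)) h

lemma deriv_empty {a : Formula} (h : Deriv (fun _ => False) a) : StableProv a := by
  induction h with
  | hyp hx => exact hx.elim
  | ax hx => exact hx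
  | mp _ _ ih1 ih2 => exact .mp _ _ ih1 ih2

/-! Basic position lemmas. -/

lemma nextPos_extend (d : Dialogue) (m : Move) :
    nextPos (d.extend m) = nextPos d + 1 := by
  simp [nextPos, Dialogue.extend]

lemma moveAt_some_lt {d : Dialogue} {k : ℕ} {m : Move} (h : d.moveAt k = some m) :
    k < nextPos d := by
  unfold Dialogue.moveAt at h
  split at h
  · exact absurd h (by simp)
  · rename_i hk
    have h2 : k - 1 < d.moves.length := by
      by_contra hc
      rw [List.getElem?_eq_none (by omega)] at h
      exact absurd h (by simp)
    unfold nextPos; omega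

lemma stmtAt_some_lt {d : Dialogue} {k : ℕ} {s : Statement} (h : d.stmtAt k = some s) :
    k < nextPos d := by
  unfold Dialogue.stmtAt at h
  split at h
  · unfold nextPos; omega
  · rename_i hk
    have h2 : k - 1 < d.moves.length := by
      by_contra hc
      rw [List.getElem?_eq_none (by omega)] at h
      exact absurd h (by simp)
    unfold nextPos; omega

lemma moveAt_extend_lt {d : Dialogue} {m : Move} {k : ℕ} (h : k < nextPos d) :
    (d.extend m).moveAt k = d.moveAt k := by
  unfold Dialogue.moveAt Dialogue.extend
  split
  · rfl
  · rename_i hk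
    have h2 : k - 1 < d.moves.length := by unfold nextPos at h; omega
    rw [List.getElem?_append, if_pos h2]

lemma moveAt_extend_self (d : Dialogue) (m : Move) :
    (d.extend m).moveAt (nextPos d) = some m := by
  unfold Dialogue.moveAt Dialogue.extend nextPos
  simp

lemma stmtAt_extend_lt {d : Dialogue} {m : Move} {k : ℕ} (h : k < nextPos d) :
    (d.extend m).stmtAt k = d.stmtAt k := by
  unfold Dialogue.stmtAt Dialogue.extend
  split
  · rfl
  · rename_i hk
    have h2 : k - 1 < d.moves.length := by unfold nextPos at h; omega
    rw [List.getElem?_append, if_pos h2]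

lemma stmtAt_extend_self (d : Dialogue) (m : Move) :
    (d.extend m).stmtAt (nextPos d) = some m.statement := by
  unfold Dialogue.stmtAt Dialogue.extend nextPos
  simp

lemma refs_lt {d : Dialogue} (hp : ParticleOK d) {k : ℕ} {mm : Move}
    (h : d.moveAt k = some mm) : mm.ref < k := by
  unfold Dialogue.moveAt at h
  split at h
  · exact absurd h (by simp)
  · rename_i hk
    have := (hp (k - 1) mm h).1
    omega

lemma isAttackPos_extend_lt {d : Dialogue} {m : Move} {k : ℕ} (h : k < nextPos d) :
    IsAttackPos (d.extend m) k ↔ IsAttackPos d k := by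
  unfold IsAttackPos; rw [moveAt_extend_lt h]

lemma isDefenseOf_extend_lt {d : Dialogue} {m : Move} {k r : ℕ} (h : k < nextPos d) :
    IsDefenseOf (d.extend m) k r ↔ IsDefenseOf d k r := by
  unfold IsDefenseOf; rw [moveAt_extend_lt h]

lemma no_self_defense {d : Dialogue} (hp : ParticleOK d) {j r : ℕ}
    (h : IsDefenseOf d j r) : r < j := by
  obtain ⟨mm, hmm, _, hr⟩ := h
  have := refs_lt hp hmm
  omega

lemma isDefenseOf_extend_cases {d : Dialogue} {m : Move} {j r : ℕ}
    (h : IsDefenseOf (d.extend m) j r) :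
    (j = nextPos d ∧ m.isAttack = false ∧ m.ref = r) ∨
      (j < nextPos d ∧ IsDefenseOf d j r) := by
  obtain ⟨mm, hmm, hA, hr⟩ := h
  have hlt : j < nextPos d + 1 := by
    have := moveAt_some_lt hmm; rwa [nextPos_extend] at this
  by_cases hj : j = nextPos d
  · subst hj
    rw [moveAt_extend_self] at hmm
    injection hmm with hmm; subst hmm
    exact Or.inl ⟨rfl, hA, hr⟩
  · have hjlt : j < nextPos d := by omega
    rw [moveAt_extend_lt hjlt] at hmm
    exact Or.inr ⟨hjlt, mm, hmm, hA, hr⟩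

lemma isAttackOn_extend_cases {d : Dialogue} {m : Move} {j r : ℕ}
    (h : IsAttackOn (d.extend m) j r) :
    (j = nextPos d ∧ m.isAttack = true ∧ m.ref = r) ∨
      (j < nextPos d ∧ IsAttackOn d j r) := by
  obtain ⟨mm, hmm, hA, hr⟩ := h
  have hlt : j < nextPos d + 1 := by
    have := moveAt_some_lt hmm; rwa [nextPos_extend] at this
  by_cases hj : j = nextPos d
  · subst hj
    rw [moveAt_extend_self] at hmm
    injection hmm with hmm; subst hmm
    exact Or.inl ⟨rfl, hA, hr⟩
  · have hjlt : j < nextPos d := by omega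
    rw [moveAt_extend_lt hjlt] at hmm
    exact Or.inr ⟨hjlt, mm, hmm, hA, hr⟩

lemma no_self_attack {d : Dialogue} (hp : ParticleOK d) {j r : ℕ}
    (h : IsAttackOn d j r) : r < j := by
  obtain ⟨mm, hmm, _, hr⟩ := h
  have := refs_lt hp hmm
  omega
/-! Abstract state read off a dialogue. -/

/-- The goal formula determined by an attack on `χ`. -/
def topGoal : Formula → Statement → Option Formula
  | .and a _, .andL => some a
  | .and _ b, .andR => some b
  | .or a b, .qmark => some (.or a b)
  | .imp _ b, .form _ => some b
  | .neg _, .form _ => some Fls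
  | _, _ => none

/-- The formulas granted (asserted) by O. -/
def OGam (d : Dialogue) : Formula → Prop :=
  fun χ => ∃ j, j % 2 = 1 ∧ d.stmtAt j = some (.form χ)

/-- `r` is the most recent open attack against P. -/
def TopOpen (d : Dialogue) (r : ℕ) : Prop :=
  r % 2 = 1 ∧ OpenAt d r (nextPos d) ∧
    ∀ r', r' % 2 = 1 → OpenAt d r' (nextPos d) → r' ≤ r

/-- The goal corresponding to the attack at position `r`. -/
def GoalOf (d : Dialogue) (r : ℕ) (g : Formula) : Prop :=
  ∃ a χ, d.moveAt r = some a ∧ a.isAttack = true ∧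
    d.stmtAt a.ref = some (.form χ) ∧ topGoal χ a.statement = some g

/-- The sequent-style statement attached to a dialogue position. -/
def Pstat (d : Dialogue) : Prop :=
  Legal rulesetEprime d → ∀ r g, TopOpen d r → GoalOf d r g → Deriv (OGam d) g

/-- The induction motive. -/
def Mot (d : Dialogue) : Prop :=
  (nextPos d % 2 = 0 → Pstat d) ∧
  (nextPos d % 2 = 1 → ∀ m, LegalExt rulesetEprime d m → Pstat (d.extend m))

lemma OGam_extend_even {d : Dialogue} {m : Move} (h : nextPos d % 2 = 0) (χ : Formula) :
    OGam (d.extend m) χ ↔ OGam d χ := by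
  constructor
  · rintro ⟨j, hj, hs⟩
    have hlt : j < nextPos d + 1 := by
      have := stmtAt_some_lt hs; rwa [nextPos_extend] at this
    have hne : j ≠ nextPos d := by omega
    have hjlt : j < nextPos d := by omega
    rw [stmtAt_extend_lt hjlt] at hs
    exact ⟨j, hj, hs⟩
  · rintro ⟨j, hj, hs⟩
    have := stmtAt_some_lt hs
    exact ⟨j, hj, by rwa [stmtAt_extend_lt this]⟩

lemma OGam_extend_odd {d : Dialogue} {m : Move} (h : nextPos d % 2 = 1) (χ : Formula) :
    OGam (d.extend m) χ ↔ (m.statement = .form χ ∨ OGam d χ) := by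
  constructor
  · rintro ⟨j, hj, hs⟩
    have hlt : j < nextPos d + 1 := by
      have := stmtAt_some_lt hs; rwa [nextPos_extend] at this
    by_cases hje : j = nextPos d
    · subst hje
      rw [stmtAt_extend_self] at hs
      exact Or.inl (by injection hs)
    · have hjlt : j < nextPos d := by omega
      rw [stmtAt_extend_lt hjlt] at hs
      exact Or.inr ⟨j, hj, hs⟩
  · rintro (hs | ⟨j, hj, hs⟩)
    · exact ⟨nextPos d, h, by rw [stmtAt_extend_self, hs]⟩
    · have := stmtAt_some_lt hs
      exact ⟨j, hj, by rwa [stmtAt_extend_lt this]⟩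

lemma goalOf_extend {d : Dialogue} {m : Move} {r : ℕ} {g : Formula}
    (hp : ParticleOK d) (hg : GoalOf d r g) : GoalOf (d.extend m) r g := by
  obtain ⟨a, χ, hma, hA, hs, ht⟩ := hg
  have hr : r < nextPos d := moveAt_some_lt hma
  have har : a.ref < r := refs_lt hp hma
  exact ⟨a, χ, by rw [moveAt_extend_lt hr]; exact hma, hA,
    by rw [stmtAt_extend_lt (lt_trans har hr)]; exact hs, ht⟩

lemma topOpen_fresh {d : Dialogue} (hp : ParticleOK d) {r : ℕ} {m₁ : Move}
    (hmo : d.moveAt r = some m₁) (hA : m₁.isAttack = true) (hodd : r % 2 = 1)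
    (hr : r + 1 = nextPos d) : TopOpen d r := by
  refine ⟨hodd, ⟨⟨m₁, hmo, hA⟩, ?_⟩, ?_⟩
  · rintro ⟨j, hj, hdef⟩
    have := no_self_defense hp hdef
    omega
  · intro r' _ hop
    obtain ⟨mm, hmm, _⟩ := hop.1
    have := moveAt_some_lt hmm
    omega

lemma topOpen_after {d : Dialogue} (hp : ParticleOK d) {m m₁ : Move}
    (heven : nextPos d % 2 = 0) (hPA : m.isAttack = true)
    (hOD : m₁.isAttack = false) (href : m₁.ref = nextPos d)
    {r : ℕ} (h : TopOpen d r) : TopOpen ((d.extend m).extend m₁) r := by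
  obtain ⟨hodd, ⟨hA, hnd⟩, hmax⟩ := h
  have hrlt : r < nextPos d := by
    obtain ⟨mm, hmm, _⟩ := hA; exact moveAt_some_lt hmm
  have hn1 : nextPos (d.extend m) = nextPos d + 1 := nextPos_extend d m
  have hn2 : nextPos ((d.extend m).extend m₁) = nextPos d + 2 := by
    rw [nextPos_extend, hn1]
  refine ⟨hodd, ⟨?_, ?_⟩, ?_⟩
  · rw [isAttackPos_extend_lt (by omega), isAttackPos_extend_lt hrlt]
    exact hA
  · rintro ⟨j, hj, hdef⟩
    rw [hn2] at hj
    rcases isDefenseOf_extend_cases hdef with ⟨hje, hmA, hmr⟩ | ⟨hjlt, hdef2⟩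
    · -- j is the O move m₁ : a defense of position nextPos d ≠ r
      rw [href] at hmr
      omega
    · rw [hn1] at hjlt
      rcases isDefenseOf_extend_cases hdef2 with ⟨hje, hmA, hmr⟩ | ⟨hjlt2, hdef3⟩
      · rw [hmA] at hPA; exact absurd hPA (by simp)
      · exact hnd ⟨j, hjlt2, hdef3⟩
  · intro r' hodd' hop
    obtain ⟨mm, hmm, hmA⟩ := hop.1
    have hlt : r' < nextPos d + 2 := by
      have := moveAt_some_lt hmm; omega
    by_cases hc1 : r' = nextPos d + 1
    · subst hc1
      rw [show nextPos d + 1 = nextPos (d.extend m) from hn1.symm,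
        moveAt_extend_self] at hmm
      injection hmm with hmm; subst hmm
      rw [hmA] at hOD; exact absurd hOD (by simp)
    · have hc2 : r' ≠ nextPos d := by omega
      have hc3 : r' < nextPos d := by omega
      apply hmax r' hodd'
      refine ⟨?_, ?_⟩
      · rw [moveAt_extend_lt (by rw [hn1]; omega), moveAt_extend_lt hc3] at hmm
        exact ⟨mm, hmm, hmA⟩
      · rintro ⟨j, hj, hdef⟩
        apply hop.2
        refine ⟨j, by omega, ?_⟩
        rw [isDefenseOf_extend_lt (by rw [hn1]; omega), isDefenseOf_extend_lt (by omega)]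
        exact hdef
/-! Legality of O-extensions. -/

lemma MoveOK_extend {d : Dialogue} (hp : ParticleOK d) {n : ℕ} {mm m : Move}
    (hn : n ≤ nextPos d) (h : MoveOK d n mm) : MoveOK (d.extend m) n mm := by
  obtain ⟨h1, h2, h3, h4⟩ := h
  refine ⟨h1, h2, ?_, ?_⟩
  · intro hA
    obtain ⟨ψ, hs, ha⟩ := h3 hA
    exact ⟨ψ, by rw [stmtAt_extend_lt (by omega)]; exact hs, ha⟩
  · intro hA
    obtain ⟨a, χ, hma, haA, hsa, hdf⟩ := h4 hA
    have h5 : mm.ref < nextPos d := by omega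
    have h6 : a.ref < nextPos d := lt_trans (refs_lt hp hma) h5
    exact ⟨a, χ, by rw [moveAt_extend_lt h5]; exact hma, haA,
      by rw [stmtAt_extend_lt h6]; exact hsa, hdf⟩

lemma particleOK_extend {d : Dialogue} {m : Move} (hp : ParticleOK d)
    (hmo : MoveOK (d.extend m) (nextPos d) m) : ParticleOK (d.extend m) := by
  intro i mm h
  simp only [Dialogue.extend] at h
  by_cases hi : i < d.moves.length
  · rw [List.getElem?_append, if_pos hi] at h
    exact MoveOK_extend hp (by unfold nextPos; omega) (hp i mm h)
  · have hlen : i < (d.moves ++ [m]).length := by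
      by_contra hc
      rw [List.getElem?_eq_none (by omega)] at h
      exact absurd h (by simp)
    simp at hlen
    have hieq : i = d.moves.length := by omega
    subst hieq
    rw [List.getElem?_concat_length] at h
    injection h with h; subst h
    have : d.moves.length + 1 = nextPos d := rfl
    rw [this]
    exact hmo

lemma legalExt_O {d : Dialogue} (hd : Legal rulesetEprime d) (hodd : nextPos d % 2 = 1)
    (m : Move) (href : m.ref + 1 = nextPos d)
    (hatk : m.isAttack = true → ∃ ψ, d.stmtAt m.ref = some (.form ψ) ∧ Attacks m.statement ψ)
    (hdef : m.isAttack = false → ∃ a χ, d.moveAt m.ref = some a ∧ a.isAttack = true ∧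
        d.stmtAt a.ref = some (.form χ) ∧ Defends χ a.statement m.statement) :
    LegalExt rulesetEprime d m := by
  obtain ⟨hp, h10, h11, h12, h13, hE⟩ := hd
  have hmo : MoveOK (d.extend m) (nextPos d) m := by
    refine ⟨by omega, by omega, ?_, ?_⟩
    · intro hA
      obtain ⟨ψ, hs, ha⟩ := hatk hA
      exact ⟨ψ, by rw [stmtAt_extend_lt (by omega)]; exact hs, ha⟩
    · intro hA
      obtain ⟨a, χ, hma, haA, hsa, hdf⟩ := hdef hA
      have h1 : m.ref < nextPos d := by omega
      have h2 : a.ref < nextPos d := lt_trans (refs_lt hp hma) h1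
      exact ⟨a, χ, by rw [moveAt_extend_lt h1]; exact hma, haA,
        by rw [stmtAt_extend_lt h2]; exact hsa, hdf⟩
  have hp' : ParticleOK (d.extend m) := particleOK_extend hp hmo
  refine ⟨hp', ?_, ?_, ?_, ?_, ?_⟩
  · -- D10prime
    intro n' q hn' hs
    have hlt : n' < nextPos d + 1 := by
      have := stmtAt_some_lt hs; rwa [nextPos_extend] at this
    have hn'lt : n' < nextPos d := by omega
    rw [stmtAt_extend_lt hn'lt] at hs
    obtain ⟨j, hj1, hj2, hj3⟩ := h10 n' q hn' hs
    refine ⟨j, hj1, hj2, ?_⟩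
    rcases hj3 with hj3 | hj3
    · exact Or.inl (by rw [stmtAt_extend_lt (by omega)]; exact hj3)
    · exact Or.inr (by rw [stmtAt_extend_lt (by omega)]; exact hj3)
  · -- D11
    intro n' r hdf'
    rcases isDefenseOf_extend_cases hdf' with ⟨hje, hmA, hmr⟩ | ⟨hjlt, hdf2⟩
    · -- the new move
      subst hje
      obtain ⟨a, χ, hma, haA, _, _⟩ := hdef hmA
      have hrlt : r < nextPos d := by omega
      constructor
      · refine ⟨⟨a, by rw [moveAt_extend_lt hrlt, ← hmr]; exact hma,
          haA⟩, ?_⟩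
        rintro ⟨j, hj, jdef⟩
        have hjlt : j < nextPos d := by omega
        have hjd : IsDefenseOf d j r := (isDefenseOf_extend_lt hjlt).mp jdef
        have := no_self_defense hp hjd
        omega
      · rintro ⟨r', h1, h2, _, _⟩
        omega
    · -- an old move
      have hdfd : IsDefenseOf d n' r := hdf2
      obtain ⟨hop, hmax⟩ := h11 n' r hdfd
      have hrn' : r < n' := no_self_defense hp hdfd
      constructor
      · refine ⟨(isAttackPos_extend_lt (by omega)).mpr hop.1, ?_⟩
        rintro ⟨j, hj, jd⟩
        exact hop.2 ⟨j, hj, (isDefenseOf_extend_lt (by omega)).mp jd⟩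
      · rintro ⟨r', ha, hb, hc, hop'⟩
        apply hmax
        refine ⟨r', ha, hb, hc, ?_, ?_⟩
        · exact (isAttackPos_extend_lt (by omega)).mp hop'.1
        · rintro ⟨j, hj, jd⟩
          exact hop'.2 ⟨j, hj, (isDefenseOf_extend_lt (by omega)).mpr jd⟩
  · -- D12
    intro n₁ n₂ r hd1 hd2
    rcases isDefenseOf_extend_cases hd1 with ⟨he1, hA1, hr1⟩ | ⟨hl1, hd1'⟩ <;>
      rcases isDefenseOf_extend_cases hd2 with ⟨he2, hA2, hr2⟩ | ⟨hl2, hd2'⟩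
    · rw [he1, he2]
    · exfalso
      have := no_self_defense hp hd2'
      omega
    · exfalso
      have := no_self_defense hp hd1'
      omega
    · exact h12 n₁ n₂ r hd1' hd2'
  · -- D13
    intro n₁ n₂ r hre ha1 ha2
    rcases isAttackOn_extend_cases ha1 with ⟨he1, hA1, hr1⟩ | ⟨hl1, ha1'⟩ <;>
      rcases isAttackOn_extend_cases ha2 with ⟨he2, hA2, hr2⟩ | ⟨hl2, ha2'⟩
    · rw [he1, he2]
    · exfalso
      have := no_self_attack hp ha2'
      omega
    · exfalso
      have := no_self_attack hp ha1'
      omega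
    · exact h13 n₁ n₂ r hre ha1' ha2'
  · -- E
    intro n' mm hodd' hmm
    have hlt : n' < nextPos d + 1 := by
      have := moveAt_some_lt hmm; rwa [nextPos_extend] at this
    by_cases hc : n' = nextPos d
    · subst hc
      rw [moveAt_extend_self] at hmm
      injection hmm with hmm; subst hmm
      omega
    · have hl : n' < nextPos d := by omega
      rw [moveAt_extend_lt hl] at hmm
      exact hE n' mm hodd' hmm
/-! Inversion and the assertion lemma. -/

lemma openAt_extend {d : Dialogue} {m : Move} {r k : ℕ} (hr : r < nextPos d)
    (hk : k ≤ nextPos d) : OpenAt (d.extend m) r k ↔ OpenAt d r k := by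
  unfold OpenAt
  rw [isAttackPos_extend_lt hr]
  constructor
  · rintro ⟨h1, h2⟩
    exact ⟨h1, fun ⟨j, hj, hdf⟩ => h2 ⟨j, hj, (isDefenseOf_extend_lt (by omega)).mpr hdf⟩⟩
  · rintro ⟨h1, h2⟩
    exact ⟨h1, fun ⟨j, hj, hdf⟩ => h2 ⟨j, hj, (isDefenseOf_extend_lt (by omega)).mp hdf⟩⟩

lemma attacks_cases {s : Statement} {χ : Formula} (h : Attacks s χ) :
    (∃ a b, χ = .and a b ∧ s = .andL) ∨ (∃ a b, χ = .and a b ∧ s = .andR) ∨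
    (∃ a b, χ = .or a b ∧ s = .qmark) ∨ (∃ a b, χ = .imp a b ∧ s = .form a) ∨
    (∃ a, χ = .neg a ∧ s = .form a) := by
  cases h with
  | andL a b => exact Or.inl ⟨a, b, rfl, rfl⟩
  | andR a b => exact Or.inr (Or.inl ⟨a, b, rfl, rfl⟩)
  | qmark a b => exact Or.inr (Or.inr (Or.inl ⟨a, b, rfl, rfl⟩))
  | imp a b => exact Or.inr (Or.inr (Or.inr (Or.inl ⟨a, b, rfl, rfl⟩)))
  | neg a => exact Or.inr (Or.inr (Or.inr (Or.inr ⟨a, rfl, rfl⟩)))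

lemma defends_cases {χ : Formula} {s t : Statement} (h : Defends χ s t) :
    (∃ a b, χ = .and a b ∧ s = .andL ∧ t = .form a) ∨
    (∃ a b, χ = .and a b ∧ s = .andR ∧ t = .form b) ∨
    (∃ a b, χ = .or a b ∧ s = .qmark ∧ (t = .form a ∨ t = .form b)) ∨
    (∃ a b, χ = .imp a b ∧ s = .form a ∧ t = .form b) := by
  cases h with
  | andL a b => exact Or.inl ⟨a, b, rfl, rfl, rfl⟩
  | andR a b => exact Or.inr (Or.inl ⟨a, b, rfl, rfl, rfl⟩)
  | orL a b => exact Or.inr (Or.inr (Or.inl ⟨a, b, rfl, rfl, Or.inl rfl⟩))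
  | orR a b => exact Or.inr (Or.inr (Or.inl ⟨a, b, rfl, rfl, Or.inr rfl⟩))
  | imp a b => exact Or.inr (Or.inr (Or.inr ⟨a, b, rfl, rfl, rfl⟩))

lemma Deriv.iffΓ {Γ Δ : Formula → Prop} (h : ∀ x, Γ x ↔ Δ x) {a : Formula}
    (hd : Deriv Γ a) : Deriv Δ a := hd.mono (fun x hx => (h x).mp hx)

lemma atom_granted {d : Dialogue} {m : Move} {p : ℕ} (hpar : nextPos d % 2 = 0)
    (hleg' : Legal rulesetEprime (d.extend m)) (hstmt : m.statement = .form (.atom p)) :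
    Deriv (OGam d) (.atom p) := by
  have h10 : D10prime (d.extend m) := hleg'.2.1
  have hs : (d.extend m).stmtAt (nextPos d) = some (.form (.atom p)) := by
    rw [stmtAt_extend_self, hstmt]
  obtain ⟨j, hj1, hj2, hj3⟩ := h10 (nextPos d) p hpar hs
  rcases hj3 with hj3 | hj3
  · exact Deriv.hyp ⟨j, hj2, by rwa [stmtAt_extend_lt hj1] at hj3⟩
  · exact dStab (Deriv.hyp ⟨j, hj2, by rwa [stmtAt_extend_lt hj1] at hj3⟩)

/-- If under the strategy P may assert `ψ` as the next statement (at an odd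
    `nextPos`, i.e. `d'` already ends with that P assertion), then `ψ` is
    derivable from O's grants. -/
lemma assertDeriv (d' : Dialogue) (ψ : Formula) (Γ : Formula → Prop)
    (hleg : Legal rulesetEprime d') (hodd : nextPos d' % 2 = 1)
    (hstmt : d'.stmtAt (nextPos d' - 1) = some (.form ψ))
    (hΓ : ∀ χ, OGam d' χ ↔ Γ χ)
    (hatom : ∀ p, ψ = .atom p → Deriv Γ (.atom p))
    (IH : ∀ m', LegalExt rulesetEprime d' m' → Pstat (d'.extend m')) :
    Deriv Γ ψ := by
  have hone : 1 ≤ nextPos d' := by unfold nextPos; omega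
  -- generic helper facts for a fresh O attack m₁ on ψ
  have hmain : ∀ (s : Statement) (g : Formula), Attacks s ψ → topGoal ψ s = some g →
      Deriv (fun χ => (s = .form χ ∨ OGam d' χ)) g := by
    intro s g hatt htg
    have hL := legalExt_O hleg hodd ⟨s, true, nextPos d' - 1⟩
      (by show nextPos d' - 1 + 1 = nextPos d'; omega)
      (fun _ => ⟨ψ, hstmt, hatt⟩) (fun h => by simp at h)
    have hPs := IH _ hL
    have hp2 : ParticleOK (d'.extend ⟨s, true, nextPos d' - 1⟩) := hL.1
    have htop2 : TopOpen (d'.extend ⟨s, true, nextPos d' - 1⟩) (nextPos d') :=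
      topOpen_fresh hp2 (moveAt_extend_self d' _) rfl hodd (by rw [nextPos_extend])
    have hgoal2 : GoalOf (d'.extend ⟨s, true, nextPos d' - 1⟩) (nextPos d') g := by
      refine ⟨⟨s, true, nextPos d' - 1⟩, ψ, moveAt_extend_self d' _, rfl, ?_, htg⟩
      rw [stmtAt_extend_lt (by omega : nextPos d' - 1 < nextPos d')]
      exact hstmt
    have hder := hPs hL (nextPos d') g htop2 hgoal2
    refine hder.iffΓ ?_
    intro χ
    rw [OGam_extend_odd hodd]
  cases ψ with
  | atom p => exact hatom p rfl
  | and a b =>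
    have h1 : Deriv (fun χ => (Statement.andL = .form χ ∨ OGam d' χ)) a :=
      hmain .andL a (.andL a b) rfl
    have h2 : Deriv (fun χ => (Statement.andR = .form χ ∨ OGam d' χ)) b :=
      hmain .andR b (.andR a b) rfl
    refine dAndI (h1.iffΓ ?_) (h2.iffΓ ?_) <;>
      · intro χ
        constructor
        · rintro (h | h)
          · exact absurd h (by simp)
          · exact (hΓ χ).mp h
        · intro h; exact Or.inr ((hΓ χ).mpr h)
  | or a b =>
    have h1 : Deriv (fun χ => (Statement.qmark = .form χ ∨ OGam d' χ)) (.or a b) :=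
      hmain .qmark (.or a b) (.qmark a b) rfl
    refine h1.iffΓ ?_
    intro χ
    constructor
    · rintro (h | h)
      · exact absurd h (by simp)
      · exact (hΓ χ).mp h
    · intro h; exact Or.inr ((hΓ χ).mpr h)
  | imp a b =>
    have h1 : Deriv (fun χ => (Statement.form a = .form χ ∨ OGam d' χ)) b :=
      hmain (.form a) b (.imp a b) rfl
    refine ded (h1.iffΓ ?_)
    intro χ
    unfold ins
    constructor
    · rintro (h | h)
      · exact Or.inl (by injection h with h; exact h.symm)
      · exact Or.inr ((hΓ χ).mp h)
    · rintro (h | h)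
      · exact Or.inl (by rw [h])
      · exact Or.inr ((hΓ χ).mpr h)
  | neg a =>
    have h1 : Deriv (fun χ => (Statement.form a = .form χ ∨ OGam d' χ)) Fls :=
      hmain (.form a) Fls (.neg a) rfl
    refine dNegI (h1.iffΓ ?_)
    intro χ
    unfold ins
    constructor
    · rintro (h | h)
      · exact Or.inl (by injection h with h; exact h.symm)
      · exact Or.inr ((hΓ χ).mp h)
    · rintro (h | h)
      · exact Or.inl (by rw [h])
      · exact Or.inr ((hΓ χ).mpr h)
/-! The main induction over winning strategies. -/

lemma defendDeriv {d : Dialogue} {m : Move}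
    (hleg' : Legal rulesetEprime (d.extend m)) (hpar : nextPos d % 2 = 0)
    (hp : ParticleOK d)
    (IHodd : ∀ m', LegalExt rulesetEprime (d.extend m) m' →
      Pstat ((d.extend m).extend m'))
    {b χ : Formula} {r : ℕ} {g : Formula}
    (hsχ : d.stmtAt m.ref = some (.form χ)) (hreflt : m.ref < nextPos d)
    (hA : m.isAttack = true) (hdf : Defends χ m.statement (.form b))
    (htop : TopOpen d r) (hgoal : GoalOf d r g) :
    Deriv (ins b (OGam d)) g := by
  have hp' : ParticleOK (d.extend m) := hleg'.1
  have hodd' : nextPos (d.extend m) % 2 = 1 := by rw [nextPos_extend]; omega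
  have hL := legalExt_O hleg' hodd' ⟨.form b, false, nextPos d⟩
    (by show nextPos d + 1 = nextPos (d.extend m); rw [nextPos_extend])
    (fun h => by simp at h)
    (fun _ => ⟨m, χ, moveAt_extend_self d m, hA,
      (by rw [stmtAt_extend_lt hreflt]; exact hsχ :
        (d.extend m).stmtAt m.ref = some (.form χ)), hdf⟩)
  have hPs := IHodd _ hL
  have htop2 : TopOpen ((d.extend m).extend ⟨.form b, false, nextPos d⟩) r :=
    topOpen_after hp hpar hA rfl rfl htop
  have hgoal2 : GoalOf ((d.extend m).extend ⟨.form b, false, nextPos d⟩) r g :=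
    goalOf_extend hp' (goalOf_extend hp hgoal)
  have hder := hPs hL r g htop2 hgoal2
  refine hder.iffΓ ?_
  intro χ'
  rw [OGam_extend_odd hodd', OGam_extend_even hpar]
  simp only [ins]
  constructor
  · rintro (h | h)
    · exact Or.inl (by injection h with h; exact h.symm)
    · exact Or.inr h
  · rintro (h | h)
    · exact Or.inl (by rw [h])
    · exact Or.inr h

lemma mot_of_winning {d : Dialogue} (h : PWinning rulesetEprime d) : Mot d := by
  unfold PWinning at h
  induction h with
  | oMoves d hturn hall ih =>
    have hpar : nextPos d % 2 = 1 := by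
      unfold PTurn at hturn; omega
    refine ⟨fun h0 => absurd h0 (by omega), fun _ m hm => ?_⟩
    exact (ih m hm).1 (by rw [nextPos_extend]; omega)
  | pMove d m hturn hm hC hw ih =>
    have hpar : nextPos d % 2 = 0 := hturn
    refine ⟨fun _ => ?_, fun h1 => absurd h1 (by omega)⟩
    intro hleg r g htop hgoal
    have IHodd : ∀ m', LegalExt rulesetEprime (d.extend m) m' →
        Pstat ((d.extend m).extend m') :=
      ih.2 (by rw [nextPos_extend]; omega)
    have hleg' : Legal rulesetEprime (d.extend m) := hm
    have hp : ParticleOK d := hleg.1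
    have hp' : ParticleOK (d.extend m) := hleg'.1
    have hodd' : nextPos (d.extend m) % 2 = 1 := by rw [nextPos_extend]; omega
    have hmAt : (d.extend m).moveAt (nextPos d) = some m := moveAt_extend_self d m
    have hmo : MoveOK (d.extend m) (nextPos d) m := by
      have h0 : (d.extend m).moves[d.moves.length]? = some m := by
        show (d.moves ++ [m])[d.moves.length]? = some m
        exact List.getElem?_concat_length
      exact hp' d.moves.length m h0
    have hreflt : m.ref < nextPos d := hmo.1
    have hrefodd : m.ref % 2 = 1 := by
      have h2 := hmo.2.1
      have h3 : nextPos (d.extend m) = nextPos d + 1 := nextPos_extend d m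
      omega
    have hassert : ∀ ψ, m.statement = .form ψ → Deriv (OGam d) ψ := by
      intro ψ hψ
      refine assertDeriv (d.extend m) ψ (OGam d) hleg' hodd' ?_
        (OGam_extend_even hpar) ?_ IHodd
      · have h4 : nextPos (d.extend m) - 1 = nextPos d := by
          rw [nextPos_extend]; omega
        rw [h4, stmtAt_extend_self, hψ]
      · intro p hp0
        exact atom_granted hpar hleg' (by rw [hψ, hp0])
    cases hb : m.isAttack with
    | true =>
      obtain ⟨χ, hsχ', hatt⟩ := hmo.2.2.1 hb
      have hsχ : d.stmtAt m.ref = some (.form χ) := by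
        rwa [stmtAt_extend_lt hreflt] at hsχ'
      have hχΓ : OGam d χ := ⟨m.ref, hrefodd, hsχ⟩
      rcases attacks_cases hatt with ⟨a, b, hχe, hse⟩ | ⟨a, b, hχe, hse⟩ |
        ⟨a, b, hχe, hse⟩ | ⟨a, b, hχe, hse⟩ | ⟨a, hχe, hse⟩
      · subst hχe
        have hder := defendDeriv hleg' hpar hp IHodd hsχ hreflt hb
          (by rw [hse]; exact Defends.andL a b) htop hgoal
        exact dCut (dAndE1 (Deriv.hyp hχΓ)) hder
      · subst hχe
        have hder := defendDeriv hleg' hpar hp IHodd hsχ hreflt hb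
          (by rw [hse]; exact Defends.andR a b) htop hgoal
        exact dCut (dAndE2 (Deriv.hyp hχΓ)) hder
      · subst hχe
        have hd1 := defendDeriv hleg' hpar hp IHodd hsχ hreflt hb
          (by rw [hse]; exact Defends.orL a b) htop hgoal
        have hd2 := defendDeriv hleg' hpar hp IHodd hsχ hreflt hb
          (by rw [hse]; exact Defends.orR a b) htop hgoal
        exact dOrE (Deriv.hyp hχΓ) hd1 hd2
      · subst hχe
        have hda : Deriv (OGam d) a := hassert a hse
        have hder := defendDeriv hleg' hpar hp IHodd hsχ hreflt hb
          (by rw [hse]; exact Defends.imp a b) htop hgoal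
        exact dCut (Deriv.mp (Deriv.hyp hχΓ) hda) hder
      · subst hχe
        have hda : Deriv (OGam d) a := hassert a hse
        exact dNegE g (Deriv.hyp hχΓ) hda
    | false =>
      obtain ⟨a, χ, hma, haA, hsa, hDef⟩ := hmo.2.2.2 hb
      have h11 : D11 (d.extend m) := hleg'.2.2.1
      have hdf : IsDefenseOf (d.extend m) (nextPos d) m.ref := ⟨m, hmAt, hb, rfl⟩
      obtain ⟨hop, hmax⟩ := h11 _ _ hdf
      have hrlt : r < nextPos d := by
        obtain ⟨mm, hmm, _⟩ := htop.2.1.1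
        exact moveAt_some_lt hmm
      have heq : m.ref = r := by
        rcases lt_trichotomy m.ref r with hlt | heqq | hgt
        · exfalso
          exact hmax ⟨r, hlt, hrlt, by have := htop.1; omega,
            (openAt_extend hrlt le_rfl).mpr htop.2.1⟩
        · exact heqq
        · exfalso
          have hopd : OpenAt d m.ref (nextPos d) := (openAt_extend hreflt le_rfl).mp hop
          have := htop.2.2 m.ref hrefodd hopd
          omega
      obtain ⟨a', χ', hma', hA', hs', hgf⟩ := hgoal
      rw [heq, moveAt_extend_lt hrlt, hma'] at hma
      injection hma with hma
      subst hma
      have haref : a'.ref < r := refs_lt hp hma'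
      rw [stmtAt_extend_lt (lt_trans haref hrlt), hs'] at hsa
      injection hsa with hsa
      injection hsa with hsa
      subst hsa
      rcases defends_cases hDef with ⟨a0, b0, hχe, hse, hte⟩ | ⟨a0, b0, hχe, hse, hte⟩ |
        ⟨a0, b0, hχe, hse, hte⟩ | ⟨a0, b0, hχe, hse, hte⟩
      · rw [hχe, hse] at hgf
        simp only [topGoal, Option.some.injEq] at hgf
        rw [← hgf]
        exact hassert a0 hte
      · rw [hχe, hse] at hgf
        simp only [topGoal, Option.some.injEq] at hgf
        rw [← hgf]
        exact hassert b0 hte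
      · rw [hχe, hse] at hgf
        simp only [topGoal, Option.some.injEq] at hgf
        rw [← hgf]
        rcases hte with hte | hte
        · exact dOrI1 b0 (hassert a0 hte)
        · exact dOrI2 a0 (hassert b0 hte)
      · rw [hχe, hse] at hgf
        simp only [topGoal, Option.some.injEq] at hgf
        rw [← hgf]
        exact hassert b0 hte
end Soundness

/-- (Soundness for stable logic) If φ is E′-valid, then φ belongs to stable
logic. -/
theorem Eprime_sound_for_stable (φ : Formula)
    (h : valid rulesetEprime φ) : StableProv φ := by
  obtain ⟨hleg0, hwin⟩ := h
  have hM := mot_of_winning hwin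
  have hodd0 : nextPos (⟨φ, []⟩ : Dialogue) % 2 = 1 := rfl
  have hMod := hM.2 hodd0
  have hstmt0 : (⟨φ, []⟩ : Dialogue).stmtAt 0 = some (.form φ) := rfl
  have hOG0 : ∀ χ, OGam (⟨φ, []⟩ : Dialogue) χ ↔ (fun _ : Formula => False) χ := by
    intro χ
    simp only [iff_false]
    rintro ⟨j, hj, hs⟩
    have hj0 : j ≠ 0 := by omega
    unfold Dialogue.stmtAt at hs
    rw [if_neg hj0] at hs
    simp at hs
  have hatom : ∀ p, φ = .atom p → Deriv (fun _ : Formula => False) (.atom p) := by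
    intro p hp0
    have h10 : D10prime (⟨φ, []⟩ : Dialogue) := hleg0.2.1
    obtain ⟨j, hj, -, -⟩ := h10 0 p rfl (by rw [hstmt0, hp0])
    omega
  have hder : Deriv (fun _ : Formula => False) φ :=
    assertDeriv ⟨φ, []⟩ φ _ hleg0 hodd0 hstmt0 hOG0 hatom hMod
  exact deriv_empty hder

end LorenzenDialogues
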